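/- If f satisfies the gap-opening profile, then for every λ ∈ [0,1] the spectral gap of H̃(λ) satisfies E₁(λ) − E₀(λ) ≥ f₀αΔ; precisely, if ψ₀ is a unit eigenvector of H̃(λ) whose eigenvalue E₀ is the least eigenvalue, then every eigenvector of H̃(λ) orthogonal to ψ₀ has eigenvalue at least E₀ + f₀αΔ. -/

import Mathlib

set_option maxHeartbeats 1600000

lemma aux_min_eigen {E : Type*} [NormedAddCommGroup E] [InnerProductSpace ℂ E]
    [FiniteDimensional ℂ E] (hE : 0 < Module.finrank ℂ E)
    (T : E →ₗ[ℂ] E) (hT : T.IsSymmetric) :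
    ∃ (μ : ℝ) (v : E), v ≠ 0 ∧ T v = (μ : ℂ) • v ∧
      ∀ w : E, μ * ‖w‖ ^ 2 ≤ (inner ℂ w (T w) : ℂ).re := by
  set n := Module.finrank ℂ E with hn
  obtain ⟨i₀, _, hi₀⟩ := Finset.exists_min_image Finset.univ (hT.eigenvalues hn.symm)
    ⟨⟨0, hE⟩, Finset.mem_univ _⟩
  refine ⟨hT.eigenvalues hn.symm i₀, hT.eigenvectorBasis hn.symm i₀, ?_, ?_, ?_⟩
  · have := (hT.eigenvectorBasis hn.symm).orthonormal.1 i₀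
    intro h; rw [h] at this; simp at this
  · exact hT.apply_eigenvectorBasis hn.symm i₀
  · intro w
    set b := hT.eigenvectorBasis hn.symm with hb
    have h1 : (inner ℂ w (T w) : ℂ) = inner ℂ (b.repr w) (b.repr (T w)) := by
      rw [b.repr.inner_map_map]
    have h2 : (inner ℂ (b.repr w) (b.repr (T w)) : ℂ)
        = ∑ i, (starRingEnd ℂ) (b.repr w i) * (b.repr (T w) i) := by
      rw [PiLp.inner_apply]
      refine Finset.sum_congr rfl fun i _ => ?_
      simp only [RCLike.inner_apply]
      ring
    have hrepr : ∀ i, b.repr (T w) i = (hT.eigenvalues hn.symm i : ℂ) * b.repr w i := by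
      intro i; exact_mod_cast hT.eigenvectorBasis_apply_self_apply hn.symm w i
    have h3 : (inner ℂ w (T w) : ℂ).re
        = ∑ i, hT.eigenvalues hn.symm i * Complex.normSq (b.repr w i) := by
      rw [h1, h2, Complex.re_sum]
      refine Finset.sum_congr rfl fun i _ => ?_
      rw [hrepr i]
      have : (starRingEnd ℂ) (b.repr w i) * ((hT.eigenvalues hn.symm i : ℂ) * b.repr w i)
          = (hT.eigenvalues hn.symm i : ℂ) * ((b.repr w i) * (starRingEnd ℂ) (b.repr w i)) := by
        ring
      rw [this, Complex.mul_conj]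
      simp [Complex.ofReal_mul]
    have h4 : ‖w‖ ^ 2 = ∑ i, Complex.normSq (b.repr w i) := by
      have : ‖w‖ = ‖b.repr w‖ := (b.repr.norm_map w).symm
      rw [this, EuclideanSpace.norm_eq]
      rw [Real.sq_sqrt (by positivity)]
      refine Finset.sum_congr rfl fun i _ => ?_
      rw [Complex.sq_norm]
    rw [h3, h4, Finset.mul_sum]
    refine Finset.sum_le_sum fun i _ => ?_
    exact mul_le_mul_of_nonneg_right (hi₀ i (Finset.mem_univ i)) (Complex.normSq_nonneg _)

lemma aux_pq (A C B r : ℝ) (hr2 : r ^ 2 = ((A - C)/2) ^ 2 + B ^ 2) (hrpos : 0 < r) :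
    ∃ p q : ℝ, p ^ 2 + q ^ 2 = 1 ∧
      A * p ^ 2 + C * q ^ 2 + 2 * B * (p * q) = (A + C)/2 - r ∧
      A * q ^ 2 + C * p ^ 2 - 2 * B * (p * q) = (A + C)/2 + r := by
  have hDr : (A - C)/2 ≤ r := by
    nlinarith [sq_nonneg B, sq_nonneg ((A - C)/2 - r), sq_nonneg ((A - C)/2 + r)]
  have h2r : (2 * r : ℝ) ≠ 0 := by positivity
  suffices h : ∃ p q : ℝ, p ^ 2 + q ^ 2 = 1 ∧ 2 * r * p ^ 2 = r - (A - C)/2 ∧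
      2 * r * q ^ 2 = r + (A - C)/2 ∧ 2 * r * (p * q) = -B by
    obtain ⟨p, q, h1, h2, h3, h4⟩ := h
    refine ⟨p, q, h1, ?_, ?_⟩
    · refine mul_left_cancel₀ h2r ?_
      linear_combination A * h2 + C * h3 + 2 * B * h4 + 2 * hr2
    · refine mul_left_cancel₀ h2r ?_
      linear_combination A * h3 + C * h2 - 2 * B * h4 - 2 * hr2
  rcases eq_or_lt_of_le hDr with hDr' | hDr'
  · have hB0 : B = 0 := by nlinarith
    exact ⟨0, 1, by norm_num, by rw [← hDr']; ring, by rw [← hDr']; ring, by rw [hB0]; ring⟩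
  · have hkpos : 0 < 2 * r * (r - (A - C)/2) := by nlinarith
    obtain ⟨k, hk⟩ : ∃ k : ℝ, k = Real.sqrt (2 * r * (r - (A - C)/2)) := ⟨_, rfl⟩
    have hk2 : k ^ 2 = 2 * r * (r - (A - C)/2) := by rw [hk]; exact Real.sq_sqrt hkpos.le
    have hkne : k ≠ 0 := by intro h; rw [h] at hk2; nlinarith
    have hk2ne : k ^ 2 ≠ 0 := pow_ne_zero 2 hkne
    refine ⟨(r - (A - C)/2) / k, -B / k, ?_, ?_, ?_, ?_⟩
    · rw [show ((r - (A - C)/2)/k) ^ 2 + (-B/k) ^ 2 = ((r - (A - C)/2) ^ 2 + B ^ 2)/k ^ 2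
        from by ring, div_eq_one_iff_eq hk2ne]
      linear_combination -hk2 - hr2
    · rw [show 2 * r * ((r - (A - C)/2)/k) ^ 2 = 2 * r * (r - (A - C)/2) ^ 2 / k ^ 2
        from by ring, div_eq_iff hk2ne]
      linear_combination -(r - (A - C)/2) * hk2
    · rw [show 2 * r * (-B/k) ^ 2 = 2 * r * B ^ 2 / k ^ 2 from by ring, div_eq_iff hk2ne]
      linear_combination -(r + (A - C)/2) * hk2 - 2 * r * hr2
    · rw [show 2 * r * ((r - (A - C)/2)/k * (-B/k)) = 2 * r * (r - (A - C)/2) * (-B) / k ^ 2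
        from by ring, div_eq_iff hk2ne]
      linear_combination B * hk2

lemma aux_form (Δ f₀ α g A C r c Sa Sb x y : ℝ)
    (hΔ : 0 < Δ) (hαpos : 0 < α) (hα1 : α ≤ 1) (hf0pos : 0 < f₀)
    (hf0α : 10 * f₀ ≤ α) (hf0le : f₀ ≤ 1/10)
    (hg0 : 0 ≤ g) (hgle : g ≤ f₀ * Δ) (hc : c = f₀ * α * Δ)
    (hA0 : 0 ≤ A) (hC0 : 0 ≤ C) (hAC : A + C = Δ) (hrc : c ≤ r)
    (hSa : 0 ≤ Sa) (hSb : 0 ≤ Sb) (hx : 0 ≤ x) (hy : 0 ≤ y) :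
    (Δ/2 - r + c) * (Sa ^ 2 + Sb ^ 2 + x ^ 2 + y ^ 2)
      ≤ (Δ/2 + r) * (Sa ^ 2 + Sb ^ 2) + (Δ + A) * x ^ 2 + (Δ + C) * y ^ 2
        - 2 * g * (Sa * y + Sb * x + x * y) := by
  have hcpos : 0 < c := by rw [hc]; positivity
  obtain ⟨ε, hε⟩ : ∃ ε : ℝ, ε = r - c/2 := ⟨_, rfl⟩
  have hεc : c/2 ≤ ε := by rw [hε]; linarith
  have hεpos : 0 < ε := by linarith
  have hGε : g ^ 2/ε * ε = g ^ 2 := div_mul_cancel₀ _ hεpos.ne'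
  have hg5 : g ^ 2/ε ≤ Δ/5 := by
    rw [div_le_iff₀ hεpos]
    have h1 : g ^ 2 ≤ f₀ ^ 2 * Δ ^ 2 := by
      have h := mul_le_mul hgle hgle hg0 (by positivity : (0:ℝ) ≤ f₀ * Δ)
      nlinarith only [h]
    have hp : 10 * f₀ * (f₀ * Δ ^ 2) ≤ α * (f₀ * Δ ^ 2) :=
      mul_le_mul_of_nonneg_right hf0α (by positivity)
    have h2 : f₀ ^ 2 * Δ ^ 2 ≤ Δ/5 * (c/2) := by rw [hc]; nlinarith only [hp]
    have h3 := mul_le_mul_of_nonneg_left hεc (by positivity : (0:ℝ) ≤ Δ/5)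
    linarith only [h1, h2, h3]
  have hg10 : g ≤ Δ/10 := by nlinarith only [hgle, hf0le, hΔ, hf0pos]
  have hX : 0 ≤ Δ/2 + A + r - c - (g ^ 2/ε + g) := by linarith only [hg5, hg10, hA0, hrc, hΔ]
  have hY : 0 ≤ Δ/2 + C + r - c - (g ^ 2/ε + g) := by linarith only [hg5, hg10, hC0, hrc, hΔ]
  have hS : 0 ≤ 2 * r - c - ε := by linarith only [hε, hεc, hcpos, hrc]
  have hb1 : 2 * g * (Sa * y) ≤ ε * Sa ^ 2 + g ^ 2/ε * y ^ 2 := by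
    nlinarith only [sq_nonneg (ε * Sa - g * y), hεpos, hGε, mul_nonneg (mul_nonneg hg0 hSa) hy]
  have hb2 : 2 * g * (Sb * x) ≤ ε * Sb ^ 2 + g ^ 2/ε * x ^ 2 := by
    nlinarith only [sq_nonneg (ε * Sb - g * x), hεpos, hGε, mul_nonneg (mul_nonneg hg0 hSb) hx]
  have hb3 : 2 * g * (x * y) ≤ g * x ^ 2 + g * y ^ 2 := by
    nlinarith only [mul_nonneg hg0 (sq_nonneg (x - y))]
  nlinarith only [hb1, hb2, hb3, mul_nonneg hX (sq_nonneg x), mul_nonneg hY (sq_nonneg y),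
    mul_nonneg hS (add_nonneg (sq_nonneg Sa) (sq_nonneg Sb)), hAC]

lemma aux_contra (E₀ m c P Q R : ℝ) (hc : 0 < c) (hEm : E₀ ≤ m) (hP : 0 ≤ P) (hQ : 0 ≤ Q)
    (hPQ : 0 < P + Q) (hkey : (m + c) * (P + Q) ≤ P * E₀ + Q * R) : E₀ + c ≤ R := by
  by_cases hQ0 : Q = 0
  · subst hQ0
    have : False := by nlinarith only [hc, hEm, hP, hPQ, hkey]
    exact this.elim
  · have hQpos : 0 < Q := lt_of_le_of_ne hQ (Ne.symm hQ0)
    by_contra h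
    push_neg at h
    have h2 : Q * R < Q * (E₀ + c) := mul_lt_mul_of_pos_left h hQpos
    have h3 : 0 ≤ P * (m + c - E₀) := mul_nonneg hP (by linarith)
    have h4 : 0 ≤ Q * (m - E₀) := mul_nonneg hQ (by linarith)
    nlinarith only [hkey, h2, h3, h4, hQpos, hc]

lemma aux_decomp {V : Type*} [NormedAddCommGroup V] [InnerProductSpace ℂ V]
    (H : V →ₗ[ℂ] V) (hH : H.IsSymmetric) (ξ : V) (hξ : ‖ξ‖ = 1) (hHξ : H ξ = 0) (u : V) :
    (inner ℂ ξ (u - (inner ℂ ξ u : ℂ) • ξ) : ℂ) = 0 ∧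
    ‖u‖ ^ 2 = ‖(inner ℂ ξ u : ℂ)‖ ^ 2 + ‖u - (inner ℂ ξ u : ℂ) • ξ‖ ^ 2 ∧
    (inner ℂ u (H u) : ℂ) = inner ℂ (u - (inner ℂ ξ u : ℂ) • ξ) (H (u - (inner ℂ ξ u : ℂ) • ξ)) := by
  obtain ⟨a, ha⟩ : ∃ a : ℂ, a = inner ℂ ξ u := ⟨_, rfl⟩
  rw [← ha]
  have hξξ : (inner ℂ ξ ξ : ℂ) = 1 := by
    rw [inner_self_eq_norm_sq_to_K, hξ]; norm_num
  have h1 : (inner ℂ ξ (u - a • ξ) : ℂ) = 0 := by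
    rw [inner_sub_right, inner_smul_right, hξξ, mul_one, ha, sub_self]
  have hdec : u = a • ξ + (u - a • ξ) := by abel
  have hHu : H (u - a • ξ) = H u := by rw [map_sub, map_smul, hHξ, smul_zero, sub_zero]
  refine ⟨h1, ?_, ?_⟩
  · conv_lhs => rw [hdec]
    rw [@norm_add_sq ℂ _ _ _ _ (a • ξ) (u - a • ξ)]
    rw [inner_smul_left, h1, mul_zero, norm_smul, hξ]
    simp
  · rw [hHu]
    have h2 : (inner ℂ u (H u) : ℂ) = inner ℂ (a • ξ) (H u) + inner ℂ (u - a • ξ) (H u) := by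
      rw [← inner_add_left, show a • ξ + (u - a • ξ) = u from by abel]
    rw [h2, inner_smul_left, ← hH ξ u, hHξ, inner_zero_left, mul_zero, zero_add]

lemma aux_cross {V : Type*} [NormedAddCommGroup V] [InnerProductSpace ℂ V]
    (ξ η : V) (hξ : ‖ξ‖ = 1) (hη : ‖η‖ = 1) (α : ℝ) (hα : (inner ℂ ξ η : ℂ) = (α : ℂ))
    (a b : ℂ) (u' w' : V) :
    α * ((starRingEnd ℂ) a * b).re - ‖a‖ * ‖w'‖ - ‖b‖ * ‖u'‖ - ‖u'‖ * ‖w'‖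
      ≤ (inner ℂ (a • ξ + u') (b • η + w') : ℂ).re := by
  have hexp : (inner ℂ (a • ξ + u') (b • η + w') : ℂ)
      = (α : ℂ) * ((starRingEnd ℂ) a * b) + (starRingEnd ℂ) a * inner ℂ ξ w'
        + b * inner ℂ u' η + inner ℂ u' w' := by
    rw [inner_add_left, inner_add_right, inner_add_right, inner_smul_left, inner_smul_left,
      inner_smul_right, inner_smul_right, hα]
    ring
  have e1 : ((α : ℂ) * ((starRingEnd ℂ) a * b)).re = α * ((starRingEnd ℂ) a * b).re := by
    simp [Complex.mul_re, Complex.ofReal_re, Complex.ofReal_im]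
  have habs : ∀ z : ℂ, -‖z‖ ≤ z.re := fun z => by
    have h := Complex.abs_re_le_norm z
    cases abs_le.mp h; linarith
  have h2 : -(‖a‖ * ‖w'‖) ≤ ((starRingEnd ℂ) a * inner ℂ ξ w').re := by
    have hb := habs ((starRingEnd ℂ) a * inner ℂ ξ w')
    have : ‖(starRingEnd ℂ) a * (inner ℂ ξ w' : ℂ)‖ ≤ ‖a‖ * ‖w'‖ := by
      rw [norm_mul, RCLike.norm_conj]
      have := norm_inner_le_norm (𝕜 := ℂ) ξ w'
      rw [hξ, one_mul] at this
      exact mul_le_mul_of_nonneg_left this (norm_nonneg a)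
    linarith
  have h3 : -(‖b‖ * ‖u'‖) ≤ (b * inner ℂ u' η).re := by
    have hb := habs (b * inner ℂ u' η)
    have : ‖b * (inner ℂ u' η : ℂ)‖ ≤ ‖b‖ * ‖u'‖ := by
      rw [norm_mul]
      have := norm_inner_le_norm (𝕜 := ℂ) u' η
      rw [hη, mul_one] at this
      exact mul_le_mul_of_nonneg_left this (norm_nonneg b)
    linarith
  have h4 : -(‖u'‖ * ‖w'‖) ≤ (inner ℂ u' w' : ℂ).re := by
    have hb := habs (inner ℂ u' w' : ℂ)
    have := norm_inner_le_norm (𝕜 := ℂ) u' w'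
    linarith
  rw [hexp]
  simp only [Complex.add_re]
  linarith [e1]

lemma aux_Tsym {V : Type*} [NormedAddCommGroup V] [InnerProductSpace ℂ V]
    (H₁ H₂ : V →ₗ[ℂ] V) (hH₁ : H₁.IsSymmetric) (hH₂ : H₂.IsSymmetric) (A C g : ℝ)
    (T : WithLp 2 (V × V) →ₗ[ℂ] WithLp 2 (V × V))
    (hT : ∀ u w : V, T ((WithLp.equiv 2 (V × V)).symm (u, w)) =
      (WithLp.equiv 2 (V × V)).symm
        (H₁ u + ((A : ℝ) : ℂ) • u + ((g : ℝ) : ℂ) • w,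
         H₂ w + ((C : ℝ) : ℂ) • w + ((g : ℝ) : ℂ) • u)) : T.IsSymmetric := by
  intro x y
  have hx := hT x.fst x.snd
  have hy := hT y.fst y.snd
  have ex : (WithLp.equiv 2 (V × V)).symm (x.fst, x.snd) = x := rfl
  have ey : (WithLp.equiv 2 (V × V)).symm (y.fst, y.snd) = y := rfl
  rw [ex] at hx
  rw [ey] at hy
  rw [hx, hy]
  have lhs : (inner ℂ ((WithLp.equiv 2 (V × V)).symm
      (H₁ x.fst + ((A : ℝ) : ℂ) • x.fst + ((g : ℝ) : ℂ) • x.snd,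
       H₂ x.snd + ((C : ℝ) : ℂ) • x.snd + ((g : ℝ) : ℂ) • x.fst)) y : ℂ)
      = inner ℂ (H₁ x.fst + ((A : ℝ) : ℂ) • x.fst + ((g : ℝ) : ℂ) • x.snd) y.fst
        + inner ℂ (H₂ x.snd + ((C : ℝ) : ℂ) • x.snd + ((g : ℝ) : ℂ) • x.fst) y.snd := rfl
  have rhs : (inner ℂ x ((WithLp.equiv 2 (V × V)).symm
      (H₁ y.fst + ((A : ℝ) : ℂ) • y.fst + ((g : ℝ) : ℂ) • y.snd,
       H₂ y.snd + ((C : ℝ) : ℂ) • y.snd + ((g : ℝ) : ℂ) • y.fst)) : ℂ)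
      = inner ℂ x.fst (H₁ y.fst + ((A : ℝ) : ℂ) • y.fst + ((g : ℝ) : ℂ) • y.snd)
        + inner ℂ x.snd (H₂ y.snd + ((C : ℝ) : ℂ) • y.snd + ((g : ℝ) : ℂ) • y.fst) := rfl
  rw [lhs, rhs]
  simp only [inner_add_left, inner_add_right, inner_smul_left, inner_smul_right,
    Complex.conj_ofReal]
  rw [hH₁ x.fst y.fst, hH₂ x.snd y.snd]
  ring

lemma aux_quad {V : Type*} [NormedAddCommGroup V] [InnerProductSpace ℂ V]
    (H₁ H₂ : V →ₗ[ℂ] V) (A C g : ℝ)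
    (T : WithLp 2 (V × V) →ₗ[ℂ] WithLp 2 (V × V))
    (hT : ∀ u w : V, T ((WithLp.equiv 2 (V × V)).symm (u, w)) =
      (WithLp.equiv 2 (V × V)).symm
        (H₁ u + ((A : ℝ) : ℂ) • u + ((g : ℝ) : ℂ) • w,
         H₂ w + ((C : ℝ) : ℂ) • w + ((g : ℝ) : ℂ) • u)) (u w : V) :
    ((inner ℂ ((WithLp.equiv 2 (V × V)).symm (u, w))
        (T ((WithLp.equiv 2 (V × V)).symm (u, w))) : ℂ)).re
      = (inner ℂ u (H₁ u) : ℂ).re + A * ‖u‖ ^ 2 + (inner ℂ w (H₂ w) : ℂ).re + C * ‖w‖ ^ 2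
        + 2 * g * (inner ℂ u w : ℂ).re := by
  rw [hT u w]
  have e : (inner ℂ ((WithLp.equiv 2 (V × V)).symm (u, w))
      ((WithLp.equiv 2 (V × V)).symm
        (H₁ u + ((A : ℝ) : ℂ) • u + ((g : ℝ) : ℂ) • w,
         H₂ w + ((C : ℝ) : ℂ) • w + ((g : ℝ) : ℂ) • u)) : ℂ)
      = inner ℂ u (H₁ u) + ((A : ℝ) : ℂ) * inner ℂ u u + ((g : ℝ) : ℂ) * inner ℂ u w
        + (inner ℂ w (H₂ w) + ((C : ℝ) : ℂ) * inner ℂ w w + ((g : ℝ) : ℂ) * inner ℂ w u) := by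
    show (inner ℂ u (H₁ u + ((A : ℝ) : ℂ) • u + ((g : ℝ) : ℂ) • w) : ℂ)
        + inner ℂ w (H₂ w + ((C : ℝ) : ℂ) • w + ((g : ℝ) : ℂ) • u) = _
    rw [inner_add_right, inner_add_right, inner_add_right, inner_add_right,
      inner_smul_right, inner_smul_right, inner_smul_right, inner_smul_right]
  rw [e]
  have huu : (inner ℂ u u : ℂ) = ((‖u‖ ^ 2 : ℝ) : ℂ) := by
    rw [inner_self_eq_norm_sq_to_K]; norm_cast
  have hww : (inner ℂ w w : ℂ) = ((‖w‖ ^ 2 : ℝ) : ℂ) := by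
    rw [inner_self_eq_norm_sq_to_K]; norm_cast
  have hwu : (inner ℂ w u : ℂ) = (starRingEnd ℂ) (inner ℂ u w) := (inner_conj_symm w u).symm
  rw [huu, hww, hwu]
  simp only [Complex.add_re, Complex.mul_re, Complex.ofReal_re, Complex.ofReal_im,
    Complex.conj_re, Complex.conj_im, zero_mul, sub_zero, mul_zero, sub_neg_eq_add, zero_sub,
    neg_zero, add_zero, zero_add]
  ring

lemma aux_conj_mul_self (s : ℂ) : (starRingEnd ℂ) s * s = ((‖s‖ ^ 2 : ℝ) : ℂ) := by
  rw [mul_comm, Complex.mul_conj, Complex.normSq_eq_norm_sq]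

/-- If `f` satisfies the gap-opening profile, then for every `λ ∈ [0,1]` the
spectral gap of `H̃(λ)` is at least `f₀αΔ`: if `ψ₀` is a unit eigenvector whose eigenvalue `E₀`
is the least eigenvalue, then every eigenvector of `H̃(λ)` orthogonal to `ψ₀` has eigenvalue
at least `E₀ + f₀αΔ`. -/
theorem gap_lemma_profile_gap
    {V : Type*} [NormedAddCommGroup V] [InnerProductSpace ℂ V] [FiniteDimensional ℂ V]
    (Δ μ₀ f₀ : ℝ) (hΔ : 0 < Δ) (hμ₀ : 0 ≤ μ₀) (hμ₀' : μ₀ < 1)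
    (hf₀ : f₀ = (1 - μ₀) / 10)
    (H₁ H₂ : V →ₗ[ℂ] V) (hH₁ : H₁.IsSymmetric) (hH₂ : H₂.IsSymmetric)
    (ξ₀ η₀ : V) (hξ : ‖ξ₀‖ = 1) (hη : ‖η₀‖ = 1)
    (hH₁ξ : H₁ ξ₀ = 0) (hH₂η : H₂ η₀ = 0)
    (hgap₁ : ∀ v : V, (inner ℂ ξ₀ v : ℂ) = 0 → Δ * ‖v‖ ^ 2 ≤ ((inner ℂ v (H₁ v) : ℂ)).re)
    (hgap₂ : ∀ v : V, (inner ℂ η₀ v : ℂ) = 0 → Δ * ‖v‖ ^ 2 ≤ ((inner ℂ v (H₂ v) : ℂ)).re)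
    (α : ℝ) (hα : (inner ℂ ξ₀ η₀ : ℂ) = (α : ℂ)) (hα' : 1 - μ₀ ≤ α)
    (f : ℝ → ℝ)
    (hfnonneg : ∀ l ∈ Set.Icc (0:ℝ) 1, 0 ≤ f l)
    (hfmid : ∀ l ∈ Set.Icc (0:ℝ) 1, |l - 1/2| ≤ f₀ * α → f l = f₀)
    (hfmed : ∀ l ∈ Set.Icc (0:ℝ) 1, f₀ * α < |l - 1/2| → |l - 1/2| ≤ 1/5 →
      f₀ ^ 2 ≤ f l ∧ f l ≤ f₀)
    (hftail : ∀ l ∈ Set.Icc (0:ℝ) 1, 1/5 < |l - 1/2| → f l ≤ f₀ ^ 2) :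
    ∀ l ∈ Set.Icc (0:ℝ) 1,
      ∀ T : WithLp 2 (V × V) →ₗ[ℂ] WithLp 2 (V × V),
        (∀ u w : V, T ((WithLp.equiv 2 (V × V)).symm (u, w)) =
          (WithLp.equiv 2 (V × V)).symm
            (H₁ u + ((l * Δ : ℝ) : ℂ) • u + ((f l * Δ : ℝ) : ℂ) • w,
             H₂ w + (((1 - l) * Δ : ℝ) : ℂ) • w + ((f l * Δ : ℝ) : ℂ) • u)) →
        ∀ (E₀ : ℝ) (ψ₀ : WithLp 2 (V × V)), ‖ψ₀‖ = 1 → T ψ₀ = (E₀ : ℂ) • ψ₀ →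
          (∀ (E : ℂ) (φ : WithLp 2 (V × V)), φ ≠ 0 → T φ = E • φ → E₀ ≤ E.re) →
          ∀ (E : ℂ) (φ : WithLp 2 (V × V)), φ ≠ 0 → (inner ℂ ψ₀ φ : ℂ) = 0 → T φ = E • φ →
            E₀ + f₀ * α * Δ ≤ E.re := by
  intro l hl T hT E₀ ψ₀ hψ₀n hψ₀e hmin E φ hφ0 horth hφe
  obtain ⟨hl0, hl1⟩ := hl
  -- scalar abbreviations (opaque)
  obtain ⟨g, hgdef⟩ : ∃ g : ℝ, g = f l * Δ := ⟨_, rfl⟩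
  obtain ⟨A, hA⟩ : ∃ A : ℝ, A = l * Δ := ⟨_, rfl⟩
  obtain ⟨C, hC⟩ : ∃ C : ℝ, C = (1 - l) * Δ := ⟨_, rfl⟩
  obtain ⟨B, hB⟩ : ∃ B : ℝ, B = g * α := ⟨_, rfl⟩
  obtain ⟨c, hc⟩ : ∃ c : ℝ, c = f₀ * α * Δ := ⟨_, rfl⟩
  obtain ⟨r, hr⟩ : ∃ r : ℝ, r = Real.sqrt (((A - C)/2) ^ 2 + B ^ 2) := ⟨_, rfl⟩
  obtain ⟨m, hm⟩ : ∃ m : ℝ, m = Δ / 2 - r := ⟨_, rfl⟩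
  -- basic numeric facts
  have hf0pos : 0 < f₀ := by rw [hf₀]; linarith
  have h10f₀ : 10 * f₀ = 1 - μ₀ := by rw [hf₀]; ring
  have hαpos : 0 < α := by linarith
  have hα1 : α ≤ 1 := by
    have h1 : ‖(inner ℂ ξ₀ η₀ : ℂ)‖ ≤ ‖ξ₀‖ * ‖η₀‖ := norm_inner_le_norm _ _
    rw [hα, hξ, hη] at h1
    have h2 : |α| ≤ 1 := by simpa using h1
    linarith [abs_le.mp h2]
  have hf0le : f₀ ≤ 1/10 := by linarith only [h10f₀, hμ₀]
  have hf0α : 10 * f₀ ≤ α := by linarith only [h10f₀, hα']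
  have hcpos : 0 < c := by rw [hc]; positivity
  have hAC : A + C = Δ := by rw [hA, hC]; ring
  have hA0 : 0 ≤ A := by rw [hA]; positivity
  have hC0 : 0 ≤ C := by rw [hC]; nlinarith only [hl1, hΔ]
  have hfle : f l ≤ f₀ := by
    rcases le_or_gt |l - 1/2| (f₀ * α) with h | h
    · exact le_of_eq (hfmid l ⟨hl0, hl1⟩ h)
    · rcases le_or_gt |l - 1/2| (1/5) with h2 | h2
      · exact (hfmed l ⟨hl0, hl1⟩ h h2).2
      · have h3 := hftail l ⟨hl0, hl1⟩ h2
        nlinarith only [h3, hf0pos, hf0le]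
  have hg0 : 0 ≤ g := hgdef ▸ mul_nonneg (hfnonneg l ⟨hl0, hl1⟩) hΔ.le
  have hgle : g ≤ f₀ * Δ := by
    rw [hgdef]; exact mul_le_mul_of_nonneg_right hfle hΔ.le
  have hr2 : r ^ 2 = ((A - C)/2) ^ 2 + B ^ 2 := by
    rw [hr]; exact Real.sq_sqrt (by positivity)
  have hr0 : 0 ≤ r := hr ▸ Real.sqrt_nonneg _
  have hrc : c ≤ r := by
    rcases le_or_gt |l - 1/2| (f₀ * α) with h | h
    · have hfl : f l = f₀ := hfmid l ⟨hl0, hl1⟩ h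
      have hBc : B = c := by rw [hB, hgdef, hfl, hc]; ring
      have hBr : |B| ≤ r := by
        rw [hr, ← Real.sqrt_sq_eq_abs]
        exact Real.sqrt_le_sqrt (by nlinarith only [sq_nonneg ((A - C)/2)])
      rw [← hBc]
      exact le_trans (le_abs_self B) hBr
    · have hDval : |(A - C)/2| = |l - 1/2| * Δ := by
        rw [hA, hC, show (l * Δ - (1 - l) * Δ)/2 = (l - 1/2) * Δ by ring,
          abs_mul, abs_of_pos hΔ]
      have hDr : |(A - C)/2| ≤ r := by
        rw [hr, ← Real.sqrt_sq_eq_abs]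
        exact Real.sqrt_le_sqrt (by nlinarith only [sq_nonneg B])
      have : c < |(A - C)/2| := by
        rw [hDval, hc]
        have : f₀ * α * Δ < |l - 1/2| * Δ := by
          exact mul_lt_mul_of_pos_right h hΔ
        linarith
      linarith
  have hrpos : 0 < r := lt_of_lt_of_le hcpos hrc
  -- ground pair of the 2x2 matrix
  obtain ⟨p, q, hpq1, hpq2, hpq3⟩ := aux_pq A C B r hr2 hrpos
  rw [show (A + C)/2 = Δ/2 by rw [hAC]] at hpq2 hpq3
  -- symmetry of T
  have hT' : ∀ u w : V, T ((WithLp.equiv 2 (V × V)).symm (u, w)) =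
      (WithLp.equiv 2 (V × V)).symm
        (H₁ u + ((A : ℝ) : ℂ) • u + ((g : ℝ) : ℂ) • w,
         H₂ w + ((C : ℝ) : ℂ) • w + ((g : ℝ) : ℂ) • u) := by
    intro u w
    rw [hgdef, hA, hC]
    exact hT u w
  have hTsym : T.IsSymmetric := aux_Tsym H₁ H₂ hH₁ hH₂ A C g T hT'
  -- minimal eigenvalue
  haveI : Nontrivial (WithLp 2 (V × V)) := by
    refine nontrivial_of_ne ψ₀ 0 ?_
    intro h; rw [h] at hψ₀n; simp at hψ₀n
  have hfin : 0 < Module.finrank ℂ (WithLp 2 (V × V)) := Module.finrank_pos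
  obtain ⟨μ, v, hv0, hveq, hμmin⟩ := aux_min_eigen hfin T hTsym
  have hE₀μ : E₀ ≤ μ := by
    have := hmin ((μ : ℝ) : ℂ) v hv0 hveq
    simpa using this
  -- the trial vector vh
  have hvhquad := aux_quad H₁ H₂ A C g T hT' ((p : ℂ) • ξ₀) ((q : ℂ) • η₀)
  have hvhn : ‖(WithLp.equiv 2 (V × V)).symm ((p : ℂ) • ξ₀, (q : ℂ) • η₀)‖ ^ 2 = 1 := by
    rw [WithLp.prod_norm_sq_eq_of_L2]
    show ‖(p : ℂ) • ξ₀‖ ^ 2 + ‖(q : ℂ) • η₀‖ ^ 2 = 1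
    rw [norm_smul, norm_smul, hξ, hη, Complex.norm_real, Complex.norm_real]
    simp only [mul_one, Real.norm_eq_abs, sq_abs]
    exact hpq1
  have hvhT : ((inner ℂ ((WithLp.equiv 2 (V × V)).symm ((p : ℂ) • ξ₀, (q : ℂ) • η₀))
      (T ((WithLp.equiv 2 (V × V)).symm ((p : ℂ) • ξ₀, (q : ℂ) • η₀))) : ℂ)).re = m := by
    rw [hvhquad]
    have e1 : (inner ℂ ((p : ℂ) • ξ₀) (H₁ ((p : ℂ) • ξ₀)) : ℂ) = 0 := by
      rw [map_smul, hH₁ξ, smul_zero, inner_zero_right]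
    have e2 : (inner ℂ ((q : ℂ) • η₀) (H₂ ((q : ℂ) • η₀)) : ℂ) = 0 := by
      rw [map_smul, hH₂η, smul_zero, inner_zero_right]
    have e3 : ‖(p : ℂ) • ξ₀‖ ^ 2 = p ^ 2 := by
      rw [norm_smul, hξ, Complex.norm_real, mul_one, Real.norm_eq_abs, sq_abs]
    have e4 : ‖(q : ℂ) • η₀‖ ^ 2 = q ^ 2 := by
      rw [norm_smul, hη, Complex.norm_real, mul_one, Real.norm_eq_abs, sq_abs]
    have e5 : ((inner ℂ ((p : ℂ) • ξ₀) ((q : ℂ) • η₀) : ℂ)).re = p * q * α := by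
      rw [inner_smul_left, inner_smul_right, hα, Complex.conj_ofReal]
      rw [show ((p : ℂ)) * ((q : ℂ) * (α : ℂ)) = (((p * q * α : ℝ)) : ℂ) by push_cast; ring]
      rw [Complex.ofReal_re]
    rw [e1, e2, e3, e4, e5]
    simp only [Complex.zero_re]
    have : A * p ^ 2 + C * q ^ 2 + 2 * B * (p * q) = m := by rw [hm]; exact hpq2
    rw [hB] at this
    linarith only [this]
  have hμm : μ ≤ m := by
    have h1 := hμmin ((WithLp.equiv 2 (V × V)).symm ((p : ℂ) • ξ₀, (q : ℂ) • η₀))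
    rw [hvhn, hvhT, mul_one] at h1
    exact h1
  have hE₀m : E₀ ≤ m := le_trans hE₀μ hμm
  -- KEY quadratic form bound
  have key : ∀ ψ : WithLp 2 (V × V),
      (inner ℂ ((WithLp.equiv 2 (V × V)).symm ((p : ℂ) • ξ₀, (q : ℂ) • η₀)) ψ : ℂ) = 0 →
      (m + c) * ‖ψ‖ ^ 2 ≤ ((inner ℂ ψ (T ψ) : ℂ)).re := by
    intro ψ hperp
    have eψ : (WithLp.equiv 2 (V × V)).symm (ψ.fst, ψ.snd) = ψ := rfl
    have hquad := aux_quad H₁ H₂ A C g T hT' ψ.fst ψ.snd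
    rw [eψ] at hquad
    obtain ⟨a, ha⟩ : ∃ a : ℂ, a = (inner ℂ ξ₀ ψ.fst : ℂ) := ⟨_, rfl⟩
    obtain ⟨b, hb2⟩ : ∃ b : ℂ, b = (inner ℂ η₀ ψ.snd : ℂ) := ⟨_, rfl⟩
    obtain ⟨hu'perp, hunorm, huH⟩ := aux_decomp H₁ hH₁ ξ₀ hξ hH₁ξ ψ.fst
    obtain ⟨hw'perp, hwnorm, hwH⟩ := aux_decomp H₂ hH₂ η₀ hη hH₂η ψ.snd
    rw [← ha] at hu'perp hunorm huH
    rw [← hb2] at hw'perp hwnorm hwH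
    obtain ⟨u', hu'⟩ : ∃ u' : V, u' = ψ.fst - a • ξ₀ := ⟨_, rfl⟩
    obtain ⟨w', hw'⟩ : ∃ w' : V, w' = ψ.snd - b • η₀ := ⟨_, rfl⟩
    rw [← hu'] at hu'perp hunorm huH
    rw [← hw'] at hw'perp hwnorm hwH
    have hgb1 : Δ * ‖u'‖ ^ 2 ≤ ((inner ℂ ψ.fst (H₁ ψ.fst) : ℂ)).re := by
      rw [huH]; exact hgap₁ u' hu'perp
    have hgb2 : Δ * ‖w'‖ ^ 2 ≤ ((inner ℂ ψ.snd (H₂ ψ.snd) : ℂ)).re := by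
      rw [hwH]; exact hgap₂ w' hw'perp
    have hrec1 : a • ξ₀ + u' = ψ.fst := by rw [hu']; abel
    have hrec2 : b • η₀ + w' = ψ.snd := by rw [hw']; abel
    have hcr := aux_cross ξ₀ η₀ hξ hη α hα a b u' w'
    rw [hrec1, hrec2] at hcr
    have hcon : (p : ℂ) * a + (q : ℂ) * b = 0 := by
      have h0 : (inner ℂ ((WithLp.equiv 2 (V × V)).symm ((p : ℂ) • ξ₀, (q : ℂ) • η₀)) ψ : ℂ)
          = (starRingEnd ℂ) ((p : ℂ)) * inner ℂ ξ₀ ψ.fst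
            + (starRingEnd ℂ) ((q : ℂ)) * inner ℂ η₀ ψ.snd := by
        show (inner ℂ ((p : ℂ) • ξ₀) ψ.fst + inner ℂ ((q : ℂ) • η₀) ψ.snd : ℂ) = _
        rw [inner_smul_left, inner_smul_left]
      rw [h0, Complex.conj_ofReal, Complex.conj_ofReal, ← ha, ← hb2] at hperp
      exact hperp
    obtain ⟨z, hz⟩ : ∃ z : ℂ, z = (q : ℂ) * a - (p : ℂ) * b := ⟨_, rfl⟩
    have hpq1C : ((p : ℂ)) ^ 2 + ((q : ℂ)) ^ 2 = 1 := by exact_mod_cast hpq1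
    have haz : a = (q : ℂ) * z := by
      rw [hz]; linear_combination (p : ℂ) * hcon - a * hpq1C
    have hbz : b = -((p : ℂ) * z) := by
      rw [hz]; linear_combination (q : ℂ) * hcon - b * hpq1C
    have hna : ‖a‖ ^ 2 = q ^ 2 * ‖z‖ ^ 2 := by
      rw [haz, norm_mul, Complex.norm_real, Real.norm_eq_abs, mul_pow, sq_abs]
    have hnb : ‖b‖ ^ 2 = p ^ 2 * ‖z‖ ^ 2 := by
      rw [hbz, norm_neg, norm_mul, Complex.norm_real, Real.norm_eq_abs, mul_pow, sq_abs]
    have hre : ((starRingEnd ℂ) a * b).re = -(p * q) * ‖z‖ ^ 2 := by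
      have h1 : (starRingEnd ℂ) a * b = ((-(p * q) * ‖z‖ ^ 2 : ℝ) : ℂ) := by
        rw [haz, hbz, map_mul, Complex.conj_ofReal]
        rw [show ((q : ℂ)) * (starRingEnd ℂ) z * -((p : ℂ) * z)
          = -((p : ℂ) * (q : ℂ)) * (z * (starRingEnd ℂ) z) by ring]
        rw [Complex.mul_conj]
        rw [Complex.normSq_eq_norm_sq]
        push_cast
        ring
      rw [h1, Complex.ofReal_re]
    have hlow : A * ‖a‖ ^ 2 + C * ‖b‖ ^ 2 + 2 * B * ((starRingEnd ℂ) a * b).re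
        = (Δ/2 + r) * ‖z‖ ^ 2 := by
      rw [hna, hnb, hre]
      linear_combination ‖z‖ ^ 2 * hpq3
    have hpsin : ‖ψ‖ ^ 2 = ‖a‖ ^ 2 + ‖u'‖ ^ 2 + (‖b‖ ^ 2 + ‖w'‖ ^ 2) := by
      rw [WithLp.prod_norm_sq_eq_of_L2, hunorm, hwnorm]
    have hS : ‖a‖ ^ 2 + ‖b‖ ^ 2 = ‖z‖ ^ 2 := by
      rw [hna, hnb]; linear_combination ‖z‖ ^ 2 * hpq1
    have hSr : (Δ/2 + r) * (‖a‖ ^ 2 + ‖b‖ ^ 2) = (Δ/2 + r) * ‖z‖ ^ 2 := by rw [hS]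
    have hform := aux_form Δ f₀ α g A C r c (‖a‖) (‖b‖) (‖u'‖) (‖w'‖) hΔ hαpos hα1 hf0pos
      hf0α hf0le hg0 hgle hc hA0 hC0 hAC hrc (norm_nonneg a) (norm_nonneg b)
      (norm_nonneg u') (norm_nonneg w')
    have hcr2 : 2 * g * (α * ((starRingEnd ℂ) a * b).re
          - ‖a‖ * ‖w'‖ - ‖b‖ * ‖u'‖ - ‖u'‖ * ‖w'‖)
        ≤ 2 * g * ((inner ℂ ψ.fst ψ.snd : ℂ)).re :=
      mul_le_mul_of_nonneg_left hcr (by positivity)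
    have hAu : A * ‖ψ.fst‖ ^ 2 = A * ‖a‖ ^ 2 + A * ‖u'‖ ^ 2 := by rw [hunorm]; ring
    have hCw : C * ‖ψ.snd‖ ^ 2 = C * ‖b‖ ^ 2 + C * ‖w'‖ ^ 2 := by rw [hwnorm]; ring
    have hmc : (m + c) * ‖ψ‖ ^ 2
        = (Δ/2 - r + c) * (‖a‖ ^ 2 + ‖b‖ ^ 2 + ‖u'‖ ^ 2 + ‖w'‖ ^ 2) := by
      rw [hpsin, hm]; ring
    have hBg : 2 * B * ((starRingEnd ℂ) a * b).re
        = 2 * g * (α * ((starRingEnd ℂ) a * b).re) := by rw [hB]; ring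
    rw [hquad, hmc]
    linarith only [hgb1, hgb2, hcr2, hlow, hSr, hform, hAu, hCw, hBg]
  -- final step
  rw [show f₀ * α * Δ = c from hc.symm]
  obtain ⟨z₁, hz₁⟩ : ∃ z₁ : ℂ,
    z₁ = (inner ℂ ((WithLp.equiv 2 (V × V)).symm ((p : ℂ) • ξ₀, (q : ℂ) • η₀)) ψ₀ : ℂ) := ⟨_, rfl⟩
  obtain ⟨z₂, hz₂⟩ : ∃ z₂ : ℂ,
    z₂ = (inner ℂ ((WithLp.equiv 2 (V × V)).symm ((p : ℂ) • ξ₀, (q : ℂ) • η₀)) φ : ℂ) := ⟨_, rfl⟩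
  have hψψ₀ : (inner ℂ ψ₀ ψ₀ : ℂ) = 1 := by
    rw [inner_self_eq_norm_sq_to_K, hψ₀n]; norm_num
  have hφφ : (inner ℂ φ φ : ℂ) = ((‖φ‖ ^ 2 : ℝ) : ℂ) := by
    rw [inner_self_eq_norm_sq_to_K]; norm_cast
  have horth' : (inner ℂ φ ψ₀ : ℂ) = 0 := by
    rw [← inner_conj_symm, horth, map_zero]
  by_cases hzz : z₁ = 0 ∧ z₂ = 0
  · -- ψ₀ itself is orthogonal to the trial vector: contradiction with E₀ ≤ m
    have h1 := key ψ₀ (by rw [← hz₁]; exact hzz.1)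
    rw [hψ₀n] at h1
    have h2 : ((inner ℂ ψ₀ (T ψ₀) : ℂ)).re = E₀ := by
      rw [hψ₀e, inner_smul_right, hψψ₀, mul_one, Complex.ofReal_re]
    rw [h2] at h1
    simp only [one_pow, mul_one] at h1
    linarith only [h1, hE₀m, hcpos]
  · obtain ⟨s, hs⟩ : ∃ s : ℂ, s = z₂ := ⟨_, rfl⟩
    obtain ⟨t, ht⟩ : ∃ t : ℂ, t = -z₁ := ⟨_, rfl⟩
    have hperp : (inner ℂ ((WithLp.equiv 2 (V × V)).symm ((p : ℂ) • ξ₀, (q : ℂ) • η₀))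
        (s • ψ₀ + t • φ) : ℂ) = 0 := by
      rw [inner_add_right, inner_smul_right, inner_smul_right, ← hz₁, ← hz₂, hs, ht]
      ring
    have hkey := key (s • ψ₀ + t • φ) hperp
    have hTst : T (s • ψ₀ + t • φ) = s • ((E₀ : ℂ) • ψ₀) + t • (E • φ) := by
      rw [map_add, map_smul, map_smul, hψ₀e, hφe]
    have hIP : (inner ℂ (s • ψ₀ + t • φ) (T (s • ψ₀ + t • φ)) : ℂ)
        = ((‖s‖ ^ 2 : ℝ) : ℂ) * ((E₀ : ℝ) : ℂ) + ((‖t‖ ^ 2 * ‖φ‖ ^ 2 : ℝ) : ℂ) * E := by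
      rw [hTst]
      simp only [inner_add_left, inner_add_right, inner_smul_left, inner_smul_right]
      rw [hψψ₀, hφφ, horth, horth']
      rw [show ((‖s‖ ^ 2 : ℝ) : ℂ) = (starRingEnd ℂ) s * s from (aux_conj_mul_self s).symm]
      rw [show ((‖t‖ ^ 2 * ‖φ‖ ^ 2 : ℝ) : ℂ) = ((starRingEnd ℂ) t * t) * ((‖φ‖ ^ 2 : ℝ) : ℂ) by
        rw [aux_conj_mul_self t]; push_cast; try ring]
      ring
    have hIPre : ((inner ℂ (s • ψ₀ + t • φ) (T (s • ψ₀ + t • φ)) : ℂ)).re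
        = ‖s‖ ^ 2 * E₀ + (‖t‖ ^ 2 * ‖φ‖ ^ 2) * E.re := by
      rw [hIP]
      simp only [Complex.add_re, Complex.mul_re, Complex.ofReal_re, Complex.ofReal_im,
        zero_mul, sub_zero, mul_zero]
      try ring
    have hnst : ‖s • ψ₀ + t • φ‖ ^ 2 = ‖s‖ ^ 2 + ‖t‖ ^ 2 * ‖φ‖ ^ 2 := by
      rw [@norm_add_sq ℂ _ _ _ _ (s • ψ₀) (t • φ)]
      rw [inner_smul_left, inner_smul_right, horth]
      simp only [mul_zero, map_zero, norm_smul, hψ₀n, mul_one, mul_pow]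
      ring
    have hPQpos : 0 < ‖s‖ ^ 2 + ‖t‖ ^ 2 * ‖φ‖ ^ 2 := by
      rcases not_and_or.mp hzz with h | h
      · have ht0 : t ≠ 0 := by rw [ht]; simpa using h
        have hφn : 0 < ‖φ‖ := norm_pos_iff.mpr hφ0
        have htn : 0 < ‖t‖ := norm_pos_iff.mpr ht0
        positivity
      · have hs0 : s ≠ 0 := by rw [hs]; exact h
        have hsn : 0 < ‖s‖ := norm_pos_iff.mpr hs0
        positivity
    rw [hnst, hIPre] at hkey
    exact aux_contra E₀ m c (‖s‖ ^ 2) (‖t‖ ^ 2 * ‖φ‖ ^ 2) E.re hcpos hE₀m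
      (by positivity) (by positivity) hPQpos hkey
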